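/- Let d ≥ 1 be an integer, v ∈ ℝ^d, and π a permutation of {1,…,d}. Let e^j denote the j-th unit coordinate vector of ℝ^d. Then the convex hull of the d+1 points v, v+e^{π(1)}, v+e^{π(1)}+e^{π(2)}, …, v+e^{π(1)}+⋯+e^{π(d)} equals the set {x ∈ ℝ^d : 1 ≥ (x−v)_{π(1)} ≥ (x−v)_{π(2)} ≥ … ≥ (x−v)_{π(d)} ≥ 0}. -/
import Mathlib

def Sset (d : ℕ) (α : ℝ) : Set (Fin d → ℝ) :=
  {x | (∀ i : Fin d, 0 ≤ x i ∧ x i ≤ α) ∧ ∀ i j : Fin d, i ≤ j → x j ≤ x i}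

def kuhn (d : ℕ) (v : Fin d → ℝ) (π : Equiv.Perm (Fin d)) : Set (Fin d → ℝ) :=
  {x | (∀ i : Fin d, 0 ≤ x (π i) - v (π i) ∧ x (π i) - v (π i) ≤ 1) ∧
       ∀ i j : Fin d, i ≤ j → x (π j) - v (π j) ≤ x (π i) - v (π i)}

def admissible (d m : ℕ) (v : Fin d → ℤ) (π : Equiv.Perm (Fin d)) : Prop :=
  ((fun i => (v i : ℝ)) ∈ Sset d ((m : ℝ) - 1)) ∧
  ∀ (j : Fin d) (h : (j : ℕ) + 1 < d),
    v j = v ⟨(j : ℕ) + 1, h⟩ → π.symm j < π.symm ⟨(j : ℕ) + 1, h⟩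

lemma eval_aux (d : ℕ) (π : Equiv.Perm (Fin d)) (k : Fin (d+1)) (i : Fin d) :
    ((∑ i' ∈ Finset.univ.filter (fun i' : Fin d => (i':ℕ) < (k:ℕ)),
        Pi.single (π i') (1:ℝ) : Fin d → ℝ)) (π i)
      = if (i:ℕ) < (k:ℕ) then 1 else 0 := by
  rw [Finset.sum_apply]
  simp only [Pi.single_apply, EmbeddingLike.apply_eq_iff_eq]
  rw [Finset.sum_ite_eq]
  simp

theorem convexHull_eq_kuhn (d : ℕ) (hd : 1 ≤ d) (v : Fin d → ℝ) (π : Equiv.Perm (Fin d)) :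
    convexHull ℝ
      {p : Fin d → ℝ | ∃ k : Fin (d + 1),
        p = v + ∑ i ∈ Finset.univ.filter (fun i : Fin d => (i : ℕ) < (k : ℕ)),
              Pi.single (π i) (1 : ℝ)} = kuhn d v π := by
  set P : Fin (d+1) → (Fin d → ℝ) := fun k =>
    v + ∑ i ∈ Finset.univ.filter (fun i : Fin d => (i : ℕ) < (k : ℕ)),
          Pi.single (π i) (1 : ℝ) with hP
  have hPapp : ∀ (k : Fin (d+1)) (i : Fin d),
      P k (π i) = v (π i) + if (i:ℕ) < (k:ℕ) then 1 else 0 := by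
    intro k i
    simp only [hP, Pi.add_apply]
    rw [eval_aux]
  apply Set.Subset.antisymm
  · apply convexHull_min
    · rintro p ⟨k, rfl⟩
      constructor
      · intro i
        rw [show v + ∑ i ∈ Finset.univ.filter (fun i : Fin d => (i : ℕ) < (k : ℕ)),
              Pi.single (π i) (1 : ℝ) = P k from rfl, hPapp]
        split <;> norm_num
      · intro i j hij
        rw [show v + ∑ i ∈ Finset.univ.filter (fun i : Fin d => (i : ℕ) < (k : ℕ)),
              Pi.single (π i) (1 : ℝ) = P k from rfl, hPapp, hPapp]
        have : (j:ℕ) < (k:ℕ) → (i:ℕ) < (k:ℕ) := fun h => lt_of_le_of_lt hij h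
        split <;> split <;> simp_all <;> norm_num
    · -- kuhn is convex
      intro x hx y hy a b ha hb hab
      constructor
      · intro i
        have h1 := hx.1 i
        have h2 := hy.1 i
        simp only [Pi.add_apply, Pi.smul_apply, smul_eq_mul]
        have hv : a * v (π i) + b * v (π i) = v (π i) := by rw [← add_mul, hab, one_mul]
        constructor <;>
          nlinarith [mul_nonneg ha h1.1, mul_nonneg hb h2.1,
            mul_le_mul_of_nonneg_left h1.2 ha, mul_le_mul_of_nonneg_left h2.2 hb]
      · intro i j hij
        have h1 := hx.2 i j hij
        have h2 := hy.2 i j hij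
        simp only [Pi.add_apply, Pi.smul_apply, smul_eq_mul]
        have hvi : a * v (π i) + b * v (π i) = v (π i) := by rw [← add_mul, hab, one_mul]
        have hvj : a * v (π j) + b * v (π j) = v (π j) := by rw [← add_mul, hab, one_mul]
        nlinarith [mul_le_mul_of_nonneg_left h1 ha, mul_le_mul_of_nonneg_left h2 hb]
  · intro x hx
    obtain ⟨hx1, hx2⟩ := hx
    set y : Fin d → ℝ := fun i => x (π i) - v (π i) with hy
    set z : ℕ → ℝ := fun n => if h : n < d then y ⟨n, h⟩ else 0 with hz
    set Y : ℕ → ℝ := fun n => if n = 0 then 1 else z (n - 1) with hY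
    set w : Fin (d+1) → ℝ := fun k => Y k - Y ((k:ℕ) + 1) with hw
    have hz0 : ∀ n, 0 ≤ z n := by
      intro n; rw [hz]; dsimp only
      split
      · exact (hx1 _).1
      · exact le_refl _
    have hz1 : ∀ n, z n ≤ 1 := by
      intro n; rw [hz]; dsimp only
      split
      · exact (hx1 _).2
      · norm_num
    have hzmono : ∀ n, z (n+1) ≤ z n := by
      intro n
      by_cases h0 : n < d
      · by_cases h1 : n + 1 < d
        · simp only [hz, dif_pos h0, dif_pos h1]
          exact hx2 ⟨n, h0⟩ ⟨n+1, h1⟩ (by simp)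
        · simp only [hz, dif_pos h0, dif_neg h1]
          exact (hx1 _).1
      · have h1 : ¬ n + 1 < d := fun h => h0 (Nat.lt_of_succ_lt h)
        simp only [hz, dif_neg h0, dif_neg h1]
        exact le_refl _
    have hY0 : Y 0 = 1 := by simp [hY]
    have hYsucc : ∀ n, Y (n+1) = z n := by intro n; simp [hY]
    have hYd : Y (d+1) = 0 := by rw [hYsucc]; simp [hz]
    have hsum : ∑ k : Fin (d+1), w k = 1 := by
      rw [hw]
      rw [Fin.sum_univ_eq_sum_range (fun n => Y n - Y (n+1)) (d+1)]
      rw [Finset.sum_range_sub' Y, hY0, hYd, sub_zero]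
    have hwnn : ∀ k : Fin (d+1), 0 ≤ w k := by
      intro k
      rw [hw]
      have : 0 ≤ Y (k:ℕ) - Y ((k:ℕ)+1) := by
        cases hk : (k : ℕ) with
        | zero => rw [hY0, hYsucc]; exact sub_nonneg.2 (hz1 0)
        | succ m => rw [hYsucc, hYsucc]; exact sub_nonneg.2 (hzmono m)
      exact this
    have tele : ∀ b : ℕ, ∀ a : ℕ,
        ∑ n ∈ Finset.range b, (if a < n then Y n - Y (n+1) else 0)
          = if a + 1 ≤ b then Y (a+1) - Y b else 0 := by
      intro b
      induction b with
      | zero => intro a; simp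
      | succ b ih =>
        intro a
        rw [Finset.sum_range_succ, ih a]
        by_cases h1 : a + 1 ≤ b
        · rw [if_pos h1, if_pos (le_trans h1 (Nat.le_succ b)),
            if_pos (by omega : a < b)]
          ring
        · rw [if_neg h1]
          by_cases h2 : a + 1 ≤ b + 1
          · have hb : a = b := by omega
            subst hb
            simp
          · rw [if_neg h2, if_neg (by omega : ¬ a < b)]
            simp
    have hxeq : x = ∑ k : Fin (d+1), w k • P k := by
      funext j
      set i := π.symm j with hi
      have hji : π i = j := π.apply_symm_apply j
      have key : (∑ k : Fin (d+1), w k • P k) j = v (π i) + y i := by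
        rw [Finset.sum_apply]
        simp only [Pi.smul_apply, smul_eq_mul]
        rw [← hji]
        calc ∑ k : Fin (d+1), w k * P k (π i)
            = ∑ k : Fin (d+1), (w k * v (π i)
                + if (i:ℕ) < (k:ℕ) then w k else 0) := by
              refine Finset.sum_congr rfl fun k _ => ?_
              rw [hPapp, mul_add, mul_ite, mul_one, mul_zero]
          _ = (∑ k : Fin (d+1), w k) * v (π i)
                + ∑ k : Fin (d+1), (if (i:ℕ) < (k:ℕ) then w k else 0) := by
              rw [Finset.sum_add_distrib, Finset.sum_mul]
          _ = v (π i) + y i := by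
              rw [hsum, one_mul]
              congr 1
              have : ∀ k : Fin (d+1), (if (i:ℕ) < (k:ℕ) then w k else 0)
                  = (fun n => if (i:ℕ) < n then Y n - Y (n+1) else 0) (k:ℕ) := by
                intro k; rw [hw]
              rw [Finset.sum_congr rfl (fun k _ => this k),
                Fin.sum_univ_eq_sum_range (fun n => if (i:ℕ) < n then Y n - Y (n+1) else 0) (d+1),
                tele (d+1) (i:ℕ), if_pos (by omega : (i:ℕ) + 1 ≤ d + 1),
                hYsucc, hYd, sub_zero, hz]
              simp [i.isLt]
      rw [key, hji]
      simp [hy, hji]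
    rw [hxeq]
    exact (convex_convexHull ℝ _).sum_mem (fun k _ => hwnn k) hsum
      (fun k _ => subset_convexHull ℝ _ ⟨k, rfl⟩)
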